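/- (Berger–Wang theorem for isometries) Let X be a δ-hyperbolic metric space and Σ a bounded set of isometries of X. Then D(Σ) = limsup_{n→∞} d∞(Σⁿ)/n = lim_{n→∞} d∞(Σ^{2n})/(2n), where D(Σ) is the joint stable length and d∞(Σⁿ) = sup_{f ∈ Σⁿ} d∞(f). -/

import Mathlib

open Filter Topology Function

/-- The set `Sⁿ` of all compositions of `n` elements of `S`. -/
def powSet {X : Type*} (S : Set (X → X)) (n : ℕ) : Set (X → X) :=
  {g | ∃ l : List (X → X), l.length = n ∧ (∀ f ∈ l, f ∈ S) ∧ g = l.foldr (· ∘ ·) id}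

/-- The joint displacement `|S|ₓ = sup_{f ∈ S} d(fx, x)`. -/
noncomputable def dispSup {X : Type*} [MetricSpace X] (x : X) (S : Set (X → X)) : ℝ :=
  sSup ((fun f => dist (f x) x) '' S)

/-- The stable length `d∞(f) = inf_{n ≥ 1} d(fⁿx, x)/n`
(which equals `lim_n d(fⁿx, x)/n` by Fekete's lemma). -/
noncomputable def stableLen {X : Type*} [MetricSpace X] (f : X → X) (x : X) : ℝ :=
  ⨅ n : ℕ, dist (f^[n + 1] x) x / (n + 1)

/-- `d∞(S) = sup_{f ∈ S} d∞(f)`. -/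
noncomputable def dInfty {X : Type*} [MetricSpace X] (S : Set (X → X)) (x : X) : ℝ :=
  sSup ((fun f => stableLen f x) '' S)

namespace BW

noncomputable def gprod {X : Type*} [MetricSpace X] (p y z : X) : ℝ :=
  (dist p y + dist p z - dist y z) / 2

lemma gprod_nonneg {X : Type*} [MetricSpace X] (p y z : X) : 0 ≤ gprod p y z := by
  have h := dist_triangle y p z
  have h2 := dist_comm y p
  simp only [gprod]
  linarith

variable {X : Type*} [MetricSpace X]

lemma stableLen_bddBelow (f : X → X) (x : X) :
    BddBelow (Set.range fun n : ℕ => dist (f^[n + 1] x) x / (n + 1)) := by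
  refine ⟨0, ?_⟩
  rintro _ ⟨n, rfl⟩
  positivity

lemma stableLen_nonneg (f : X → X) (x : X) : 0 ≤ stableLen f x := by
  refine le_ciInf fun n => ?_
  positivity

lemma stableLen_le_dist (f : X → X) (x : X) : stableLen f x ≤ dist (f x) x := by
  have h := ciInf_le (stableLen_bddBelow f x) 0
  simp only [zero_add, Nat.cast_zero, div_one, Function.iterate_one] at h
  exact h

lemma two_stableLen_le (f : X → X) (x : X) :
    2 * stableLen f x ≤ stableLen (f ∘ f) x := by
  refine le_ciInf fun k => ?_
  have h : stableLen f x ≤ dist (f^[2 * k + 1 + 1] x) x / ((2 * k + 1 : ℕ) + 1) :=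
    ciInf_le (stableLen_bddBelow f x) (2 * k + 1)
  have hit : (f ∘ f)^[k + 1] x = f^[2 * k + 1 + 1] x := by
    have h3 : 2 * k + 1 + 1 = 2 * (k + 1) := by ring
    rw [h3, Function.iterate_mul]
    have h4 : f^[2] = f ∘ f := by
      funext y
      simp [Function.iterate_succ_apply, Function.iterate_one]
    rw [h4]
  rw [hit]
  push_cast at h
  have hk : (0:ℝ) < (k:ℝ) + 1 := by positivity
  have heq : dist (f^[2 * k + 1 + 1] x) x / ((k:ℝ) + 1)
      = 2 * (dist (f^[2 * k + 1 + 1] x) x / (2 * (k:ℝ) + 1 + 1)) := by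
    field_simp
    ring
  rw [heq]
  linarith


section Hyp

variable (δ : ℝ)

lemma step1 (hδ : 0 ≤ δ)
    (hyp : ∀ p y z v : X, min (gprod p y v) (gprod p v z) - δ ≤ gprod p y z)
    (g g' : X → X) (hg : Isometry g) (hg' : ∀ y, g (g' y) = y) (x : X)
    (hbig : 2 * gprod x (g x) (g' x) + 3 * δ < dist (g x) x) :
    ∀ n : ℕ, ((n : ℝ) + 1) * (dist (g x) x - 2 * gprod x (g x) (g' x) - 2 * δ)
      ≤ dist (g^[n + 1] x) x := by
  have hx' : dist x (g' x) = dist (g x) x := by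
    have h := hg.dist_eq x (g' x)
    rw [hg'] at h
    exact h.symm
  have h1 : ∀ m : ℕ, dist (g^[m] x) (g' x) = dist (g^[m + 1] x) x := by
    intro m
    have h := hg.dist_eq (g^[m] x) (g' x)
    rw [hg', ← Function.iterate_succ_apply' g m x] at h
    exact h.symm
  have hstep : ∀ n : ℕ, dist (g^[n + 1] x) x
      = dist (g^[n] x) x + dist (g x) x - 2 * gprod x (g^[n] x) (g' x) := by
    intro n
    have h2 := dist_comm x (g^[n] x)
    have h3 := h1 n
    simp only [gprod]
    linarith [hx']
  have hq : ∀ n : ℕ, gprod x (g^[n + 1] x) (g' x) ≤ gprod x (g x) (g' x) + δ := by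
    intro n
    induction n with
    | zero =>
      simp only [zero_add, Function.iterate_one]
      linarith
    | succ n ih =>
      have h5 := hyp x (g x) (g' x) (g^[n + 1 + 1] x)
      have e6 : gprod x (g x) (g^[n + 1 + 1] x)
          = dist (g x) x - gprod x (g^[n + 1] x) (g' x) := by
        have hd : dist (g x) (g^[n + 1 + 1] x) = dist x (g^[n + 1] x) := by
          rw [Function.iterate_succ_apply' g (n + 1) x, hg.dist_eq]
        have c1 := dist_comm x (g x)
        have c2 := dist_comm x (g^[n + 1 + 1] x)
        have c4 := dist_comm x (g^[n + 1] x)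
        have c5 := h1 (n + 1)
        have c6 := hstep (n + 1)
        simp only [gprod]
        linarith [hx']
      rcases min_le_iff.mp (show min (gprod x (g x) (g^[n + 1 + 1] x))
          (gprod x (g^[n + 1 + 1] x) (g' x)) ≤ gprod x (g x) (g' x) + δ by linarith)
          with hA | hB
      · exfalso
        rw [e6] at hA
        linarith
      · exact hB
  intro n
  induction n with
  | zero =>
    have h0 := gprod_nonneg x (g x) (g' x)
    simp only [Nat.cast_zero, zero_add, one_mul, Function.iterate_one]
    linarith
  | succ n ih =>
    have hs := hstep (n + 1)
    have hqn := hq n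
    push_cast
    push_cast at ih
    linarith

lemma ell_lower (hδ : 0 ≤ δ)
    (hyp : ∀ p y z v : X, min (gprod p y v) (gprod p v z) - δ ≤ gprod p y z)
    (g g' : X → X) (hg : Isometry g) (hg' : ∀ y, g (g' y) = y) (x : X) :
    dist (g x) x - 2 * gprod x (g x) (g' x) - 3 * δ ≤ stableLen g x := by
  rcases lt_or_ge (2 * gprod x (g x) (g' x) + 3 * δ) (dist (g x) x) with hbig | hsm
  · have hs := step1 δ hδ hyp g g' hg hg' x hbig
    refine le_ciInf fun n => ?_
    rw [le_div_iff₀ (show (0:ℝ) < (n:ℝ) + 1 by positivity)]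
    have hnd : 0 ≤ ((n:ℝ) + 1) * δ := by positivity
    nlinarith [hs n]
  · have h0 := stableLen_nonneg g x
    linarith

end Hyp

lemma mainLem (δ : ℝ) (hδ : 0 ≤ δ)
    (hyp : ∀ p y z v : X, min (gprod p y v) (gprod p v z) - δ ≤ gprod p y z)
    (a b a' b' : X → X) (ha : Isometry a) (hb : Isometry b)
    (ha' : ∀ y, a (a' y) = y) (hb' : ∀ y, b (b' y) = y) (x : X) :
    dist (b (a x)) x ≤ max (dist (a x) x) (dist (b x) x)
      + (1 / 2) * max (stableLen (b ∘ a) x) (max (2 * stableLen a x) (2 * stableLen b x))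
      + 12 * δ := by
  set L := max (stableLen (b ∘ a) x) (max (2 * stableLen a x) (2 * stableLen b x)) with hL
  have hL0 : 0 ≤ L := le_trans (stableLen_nonneg (b ∘ a) x) (le_max_left _ _)
  have hLba : stableLen (b ∘ a) x ≤ L := le_max_left _ _
  have hLa : 2 * stableLen a x ≤ L := le_trans (le_max_left _ _) (le_max_right _ _)
  have hLb : 2 * stableLen b x ≤ L := le_trans (le_max_right _ _) (le_max_right _ _)
  have hmaxa : dist (a x) x ≤ max (dist (a x) x) (dist (b x) x) := le_max_left _ _
  have hmaxb : dist (b x) x ≤ max (dist (a x) x) (dist (b x) x) := le_max_right _ _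
  by_cases h0 : dist (b (a x)) x ≤ max (dist (a x) x) (dist (b x) x) + 12 * δ
  · linarith
  push_neg at h0
  -- basic distance identities
  have eβ' : dist x (b' x) = dist (b x) x := by
    have h := hb.dist_eq x (b' x); rw [hb'] at h; exact h.symm
  have eα' : dist x (a' x) = dist (a x) x := by
    have h := ha.dist_eq x (a' x); rw [ha'] at h; exact h.symm
  have eD₀' : dist (a x) (b' x) = dist (b (a x)) x := by
    have h := hb.dist_eq (a x) (b' x); rw [hb'] at h; exact h.symm
  have eD₁' : dist (a' x) (b x) = dist (a (b x)) x := by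
    have h := ha.dist_eq (a' x) (b x); rw [ha'] at h
    rw [← h]; exact dist_comm _ _
  by_cases hbr : dist (b (a x)) x - 4 * δ ≤ dist (a (b x)) x
  -- Case 1a
  · have f1 : dist (b (a x)) (b x) = dist (a x) x := by rw [hb.dist_eq]
    have f2 : dist (b (a x)) (b (a (b x))) = dist (b x) x := by
      rw [hb.dist_eq, ha.dist_eq]; exact dist_comm _ _
    have f3 : dist (b x) (b (a (b x))) = dist (a (b x)) x := by
      rw [hb.dist_eq]; exact dist_comm _ _
    have f4 : dist (b (a x)) (b (a (b (a x)))) = dist (b (a x)) x := by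
      rw [hb.dist_eq, ha.dist_eq]; exact dist_comm _ _
    have f5 : dist (b (a (b x))) (b (a (b (a x)))) = dist (a x) x := by
      rw [hb.dist_eq, ha.dist_eq, hb.dist_eq]; exact dist_comm _ _
    have f6 : dist (b (a x)) x = dist (b (a x)) x := rfl
    have f7 : dist (b x) x = dist (b x) x := rfl
    -- gprod values at basepoint u = b (a x)
    have e1 : gprod (b (a x)) (b x) (b (a (b x)))
        = (dist (a x) x + dist (b x) x - dist (a (b x)) x) / 2 := by
      simp only [gprod, f1, f2, f3]
    have e2 : gprod (b (a x)) (b x) x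
        = (dist (a x) x + dist (b (a x)) x - dist (b x) x) / 2 := by
      simp only [gprod, f1]
    have e3 : gprod (b (a x)) (b (a (b (a x)))) (b (a (b x)))
        = (dist (b (a x)) x + dist (b x) x - dist (a x) x) / 2 := by
      simp only [gprod, f4, f2]
      rw [dist_comm (b (a (b (a x)))) (b (a (b x))), f5]
    -- connect gprod u x w with P for g = b ∘ a
    have eP : gprod x (b (a x)) (a' (b' x)) = gprod (b (a x)) x (b (a (b (a x)))) := by
      have j1 : dist x (a' (b' x)) = dist (b (a x)) x := by
        have h := (hb.comp ha).dist_eq x (a' (b' x))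
        simp only [Function.comp_apply] at h
        rw [ha' (b' x), hb' x] at h
        exact h.symm
      have j2 : dist (b (a x)) (a' (b' x)) = dist x (b (a (b (a x)))) := by
        have h := (hb.comp ha).dist_eq (b (a x)) (a' (b' x))
        simp only [Function.comp_apply] at h
        rw [ha' (b' x), hb' x] at h
        rw [← h]; exact dist_comm _ _
      simp only [gprod]
      rw [j1, j2, dist_comm x (b (a x)), f4]
    have hell : dist (b (a x)) x - 2 * gprod (b (a x)) x (b (a (b (a x)))) - 3 * δ
        ≤ stableLen (b ∘ a) x := by
      rw [← eP]
      have h := ell_lower δ hδ hyp (b ∘ a) (a' ∘ b') (hb.comp ha)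
        (fun y => by simp only [Function.comp_apply]; rw [ha' (b' y), hb' y]) x
      simpa only [Function.comp_apply] using h
    have hyp1 := hyp (b (a x)) (b x) (b (a (b x))) x
    have hyp2 := hyp (b (a x)) x (b (a (b x))) (b (a (b (a x))))
    -- hyp1 : min (gprod u p x) (gprod u x q) - δ ≤ gprod u p q
    rcases min_le_iff.mp (show min (gprod (b (a x)) (b x) x)
        (gprod (b (a x)) x (b (a (b x)))) ≤ gprod (b (a x)) (b x) (b (a (b x))) + δ by
          linarith) with hA | hB
    · rw [e1, e2] at hA
      linarith
    · -- hyp2 : min (gprod u x w) (gprod u w q) - δ ≤ gprod u x q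
      rcases min_le_iff.mp (show min (gprod (b (a x)) x (b (a (b (a x)))))
          (gprod (b (a x)) (b (a (b (a x)))) (b (a (b x))))
          ≤ gprod (b (a x)) x (b (a (b x))) + δ by linarith) with hB1 | hB2
      · rw [e1] at hB
        linarith
      · rw [e1] at hB
        rw [e3] at hB2
        linarith
  -- Case 1b
  · push_neg at hbr
    have g1 : gprod x (a x) (b' x)
        = (dist (a x) x + dist (b x) x - dist (b (a x)) x) / 2 := by
      simp only [gprod]
      rw [dist_comm x (a x), eβ', eD₀']
    have g2 : gprod x (a' x) (b x)
        = (dist (a x) x + dist (b x) x - dist (a (b x)) x) / 2 := by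
      simp only [gprod]
      rw [eα', dist_comm x (b x), eD₁']
    have hella : dist (a x) x - 2 * gprod x (a x) (a' x) - 3 * δ ≤ stableLen a x :=
      ell_lower δ hδ hyp a a' ha ha' x
    have hellb : dist (b x) x - 2 * gprod x (b x) (b' x) - 3 * δ ≤ stableLen b x :=
      ell_lower δ hδ hyp b b' hb hb' x
    have hyp3 := hyp x (a x) (b' x) (a' x)
    have hyp4 := hyp x (a' x) (b' x) (b x)
    rcases min_le_iff.mp (show min (gprod x (a x) (a' x)) (gprod x (a' x) (b' x))
        ≤ gprod x (a x) (b' x) + δ by linarith) with hPa | hZ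
    · rw [g1] at hPa
      linarith
    · rcases min_le_iff.mp (show min (gprod x (a' x) (b x)) (gprod x (b x) (b' x))
          ≤ gprod x (a' x) (b' x) + δ by linarith) with hZ1 | hPb
      · rw [g1] at hZ
        rw [g2] at hZ1
        linarith
      · rw [g1] at hZ
        linarith

lemma foldr_isom : ∀ (l : List (X → X)), (∀ f ∈ l, Isometry f ∧ Function.Surjective f) →
    Isometry (l.foldr (· ∘ ·) id) ∧ Function.Surjective (l.foldr (· ∘ ·) id)
  | [], _ => ⟨isometry_id, surjective_id⟩
  | f :: l, h => by
    have hf := h f (by simp)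
    have hl := foldr_isom l (fun g hg => h g (by simp [hg]))
    exact ⟨hf.1.comp hl.1, hf.2.comp hl.2⟩

lemma foldr_dist_le (x : X) (C : ℝ) : ∀ (l : List (X → X)), (∀ f ∈ l, Isometry f) →
    (∀ f ∈ l, dist (f x) x ≤ C) → dist (l.foldr (· ∘ ·) id x) x ≤ l.length * C
  | [], _, _ => by simp
  | f :: l, hi, hd => by
    have h1 : Isometry f := hi f (by simp)
    have hrec := foldr_dist_le x C l (fun g hg => hi g (by simp [hg]))
      (fun g hg => hd g (by simp [hg]))
    have h2 : dist (f (l.foldr (· ∘ ·) id x)) x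
        ≤ dist (f (l.foldr (· ∘ ·) id x)) (f x) + dist (f x) x := dist_triangle _ _ _
    rw [h1.dist_eq] at h2
    have h3 := hd f (by simp)
    show dist (f (l.foldr (· ∘ ·) id x)) x ≤ _
    simp only [List.length_cons]
    push_cast
    linarith

end BW

section PowSetLemmas

variable {X : Type*} (S : Set (X → X))

lemma foldr_append_comp (l₁ l₂ : List (X → X)) :
    (l₁ ++ l₂).foldr (· ∘ ·) id = (l₁.foldr (· ∘ ·) id) ∘ (l₂.foldr (· ∘ ·) id) := by
  induction l₁ with
  | nil => rfl
  | cons f l ih =>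
    simp only [List.cons_append, List.foldr_cons, ih]
    rfl

lemma id_mem_powSet : id ∈ powSet S 0 := ⟨[], rfl, by simp, rfl⟩

lemma powSet_zero : powSet S 0 = {id} := by
  ext g
  constructor
  · rintro ⟨l, hl, -, rfl⟩
    rw [List.length_eq_zero_iff] at hl
    subst hl
    rfl
  · rintro h
    rw [Set.mem_singleton_iff] at h
    subst h
    exact id_mem_powSet S

lemma comp_mem_powSet {f g : X → X} {m n : ℕ} (hf : f ∈ powSet S m) (hg : g ∈ powSet S n) :
    f ∘ g ∈ powSet S (m + n) := by
  obtain ⟨l₁, hl₁, hm₁, rfl⟩ := hf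
  obtain ⟨l₂, hl₂, hm₂, rfl⟩ := hg
  refine ⟨l₁ ++ l₂, by simp [hl₁, hl₂], ?_, ?_⟩
  · intro f hf
    rcases List.mem_append.mp hf with h | h
    · exact hm₁ f h
    · exact hm₂ f h
  · rw [foldr_append_comp]

lemma powSet_decomp {g : X → X} {m n : ℕ} (hg : g ∈ powSet S (m + n)) :
    ∃ f h : X → X, f ∈ powSet S m ∧ h ∈ powSet S n ∧ g = f ∘ h := by
  obtain ⟨l, hl, hm, rfl⟩ := hg
  refine ⟨(l.take m).foldr (· ∘ ·) id, (l.drop m).foldr (· ∘ ·) id,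
    ⟨l.take m, ?_, fun f hf => hm f (List.take_subset m l hf), rfl⟩,
    ⟨l.drop m, ?_, fun f hf => hm f (List.drop_subset m l hf), rfl⟩, ?_⟩
  · rw [List.length_take, hl]
    omega
  · rw [List.length_drop, hl]
    omega
  · rw [← foldr_append_comp, List.take_append_drop]

end PowSetLemmas

/-- **Berger–Wang for isometries.** For a bounded set `Σ` of
isometries of a `δ`-hyperbolic metric space,
`D(Σ) = limsup_n d∞(Σⁿ)/n = lim_n d∞(Σ^{2n})/(2n)`. -/
theorem stmt9 {X : Type*} [MetricSpace X] (δ : ℝ) (hδ : 0 ≤ δ)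
    (hfpc : ∀ x y s t : X, dist x y + dist s t ≤
      max (dist x s + dist y t) (dist x t + dist y s) + 2 * δ)
    (S : Set (X → X)) (hS : ∀ f ∈ S, Isometry f ∧ Function.Surjective f)
    (x : X) (hb : ∃ C : ℝ, ∀ f ∈ S, dist (f x) x ≤ C)
    (D : ℝ)
    (hD : Tendsto (fun n : ℕ => dispSup x (powSet S n) / n) atTop (nhds D)) :
    D = Filter.limsup (fun n : ℕ => dInfty (powSet S n) x / n) atTop ∧
    Tendsto (fun n : ℕ => dInfty (powSet S (2 * n)) x / (2 * n)) atTop (nhds D) := by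
  classical
  obtain ⟨C, hC⟩ := hb
  set u : ℕ → ℝ := fun n => dispSup x (powSet S n) with hu_def
  set v : ℕ → ℝ := fun n => dInfty (powSet S n) x with hv_def
  -- the Gromov-product form of the four point condition
  have hyp : ∀ p y z w : X, min (BW.gprod p y w) (BW.gprod p w z) - δ ≤ BW.gprod p y z := by
    intro p y z w
    have h := hfpc y z w p
    rcases le_total (dist y w + dist z p) (dist y p + dist z w) with hc | hc
    · rw [max_eq_right hc] at h
      have key : BW.gprod p w z - δ ≤ BW.gprod p y z := by
        simp only [BW.gprod]
        have c1 := dist_comm w p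
        have c2 := dist_comm p w
        have c3 := dist_comm z p
        have c4 := dist_comm y p
        have c5 := dist_comm w z
        linarith
      linarith [min_le_right (BW.gprod p y w) (BW.gprod p w z)]
    · rw [max_eq_left hc] at h
      have key : BW.gprod p y w - δ ≤ BW.gprod p y z := by
        simp only [BW.gprod]
        have c1 := dist_comm w p
        have c3 := dist_comm z p
        have c4 := dist_comm y p
        linarith
      linarith [min_le_left (BW.gprod p y w) (BW.gprod p w z)]
  -- membership facts
  have hmem_isom : ∀ (n : ℕ) (f : X → X), f ∈ powSet S n →
      Isometry f ∧ Function.Surjective f := by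
    rintro n f ⟨l, -, hm, rfl⟩
    exact BW.foldr_isom l (fun g hg => hS g (hm g hg))
  have hmem_dist : ∀ (n : ℕ) (f : X → X), f ∈ powSet S n → dist (f x) x ≤ n * C := by
    rintro n f ⟨l, hl, hm, rfl⟩
    have := BW.foldr_dist_le x C l (fun g hg => (hS g (hm g hg)).1)
      (fun g hg => hC g (hm g hg))
    rw [hl] at this
    exact this
  have bddU : ∀ n : ℕ, BddAbove ((fun f => dist (f x) x) '' powSet S n) := by
    intro n
    refine ⟨n * C, ?_⟩
    rintro y ⟨f, hf, rfl⟩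
    exact hmem_dist n f hf
  have bddV : ∀ n : ℕ, BddAbove ((fun f => stableLen f x) '' powSet S n) := by
    intro n
    refine ⟨n * C, ?_⟩
    rintro y ⟨f, hf, rfl⟩
    exact (BW.stableLen_le_dist f x).trans (hmem_dist n f hf)
  have hu0 : ∀ n, 0 ≤ u n := by
    intro n
    refine Real.sSup_nonneg ?_
    rintro y ⟨f, hf, rfl⟩
    exact dist_nonneg
  have hv0 : ∀ n, 0 ≤ v n := by
    intro n
    refine Real.sSup_nonneg ?_
    rintro y ⟨f, hf, rfl⟩
    exact BW.stableLen_nonneg f x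
  have huv : ∀ n, v n ≤ u n := by
    intro n
    refine Real.sSup_le ?_ (hu0 n)
    rintro y ⟨f, hf, rfl⟩
    exact (BW.stableLen_le_dist f x).trans (le_csSup (bddU n) ⟨f, hf, rfl⟩)
  have hu_zero : u 0 = 0 := by
    show dispSup x (powSet S 0) = 0
    rw [powSet_zero]
    simp [dispSup]
  have hsub : ∀ m n : ℕ, u (m + n) ≤ u m + u n := by
    intro m n
    refine Real.sSup_le ?_ (by linarith [hu0 m, hu0 n])
    rintro y ⟨g, hg, rfl⟩
    obtain ⟨f, h, hf, hh, rfl⟩ := powSet_decomp S hg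
    have h1 : dist (f (h x)) x ≤ dist (f (h x)) (f x) + dist (f x) x := dist_triangle _ _ _
    rw [(hmem_isom m f hf).1.dist_eq] at h1
    have h2 : dist (h x) x ≤ u n := le_csSup (bddU n) ⟨h, hh, rfl⟩
    have h3 : dist (f x) x ≤ u m := le_csSup (bddU m) ⟨f, hf, rfl⟩
    calc dist ((f ∘ h) x) x = dist (f (h x)) x := rfl
      _ ≤ u m + u n := by linarith
  -- u n ≥ n * D
  have hD' : ∀ n : ℕ, 1 ≤ n → (n : ℝ) * D ≤ u n := by
    intro n hn
    have hkn : ∀ k : ℕ, u (k * n) ≤ (k : ℝ) * u n := by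
      intro k
      induction k with
      | zero => simp [hu_zero]
      | succ k ih =>
        have hrw : (k + 1) * n = k * n + n := by ring
        rw [hrw]
        have := hsub (k * n) n
        push_cast
        linarith
    have h1 : Tendsto (fun k : ℕ => k * n) atTop atTop := by
      refine tendsto_atTop.mpr fun b => eventually_atTop.mpr ⟨b, fun k hk => ?_⟩
      calc b ≤ k := hk
        _ ≤ k * n := Nat.le_mul_of_pos_right k (by omega)
    have htend : Tendsto (fun k : ℕ => u (k * n) / ((k * n : ℕ) : ℝ)) atTop (𝓝 D) :=
      hD.comp h1
    have hle : ∀ᶠ k : ℕ in atTop, u (k * n) / ((k * n : ℕ) : ℝ) ≤ u n / n := by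
      filter_upwards [eventually_ge_atTop 1] with k hk
      have hkpos : (0:ℝ) < (k:ℝ) := by exact_mod_cast hk
      have hnpos : (0:ℝ) < (n:ℝ) := by exact_mod_cast hn
      have hkn' := hkn k
      rw [div_le_div_iff₀ (by push_cast; positivity) hnpos]
      push_cast
      nlinarith
    have hfin : D ≤ u n / n := le_of_tendsto htend hle
    have hnpos : (0:ℝ) < (n:ℝ) := by exact_mod_cast hn
    rw [le_div_iff₀ hnpos] at hfin
    linarith
  -- the key inequality u (2n) ≤ u n + v (2n) / 2 + 12 δ
  have hkey : ∀ n : ℕ, u (2 * n) ≤ u n + v (2 * n) / 2 + 12 * δ := by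
    intro n
    have hrepr : 2 * n = n + n := two_mul n
    refine Real.sSup_le ?_ (by linarith [hu0 n, hv0 (2 * n)])
    rintro y ⟨g, hg, rfl⟩
    rw [hrepr] at hg
    obtain ⟨bf, af, hbf, haf, rfl⟩ := powSet_decomp S hg
    obtain ⟨hbI, hbS⟩ := hmem_isom n bf hbf
    obtain ⟨haI, haS⟩ := hmem_isom n af haf
    have hmain := BW.mainLem δ hδ hyp af bf (Function.surjInv haS) (Function.surjInv hbS)
      haI hbI (fun y => Function.surjInv_eq haS y) (fun y => Function.surjInv_eq hbS y) x
    have h1 : dist (af x) x ≤ u n := le_csSup (bddU n) ⟨af, haf, rfl⟩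
    have h2 : dist (bf x) x ≤ u n := le_csSup (bddU n) ⟨bf, hbf, rfl⟩
    have h3 : stableLen (bf ∘ af) x ≤ v (2 * n) :=
      le_csSup (bddV (2 * n)) ⟨bf ∘ af, by rw [hrepr]; exact comp_mem_powSet S hbf haf, rfl⟩
    have h4 : 2 * stableLen af x ≤ v (2 * n) :=
      (BW.two_stableLen_le af x).trans
        (le_csSup (bddV (2 * n)) ⟨af ∘ af, by rw [hrepr]; exact comp_mem_powSet S haf haf, rfl⟩)
    have h5 : 2 * stableLen bf x ≤ v (2 * n) :=
      (BW.two_stableLen_le bf x).trans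
        (le_csSup (bddV (2 * n)) ⟨bf ∘ bf, by rw [hrepr]; exact comp_mem_powSet S hbf hbf, rfl⟩)
    have hmax1 : max (dist (af x) x) (dist (bf x) x) ≤ u n := max_le h1 h2
    have hmax2 : max (stableLen (bf ∘ af) x)
        (max (2 * stableLen af x) (2 * stableLen bf x)) ≤ v (2 * n) :=
      max_le h3 (max_le h4 h5)
    calc dist ((bf ∘ af) x) x = dist (bf (af x)) x := rfl
      _ ≤ max (dist (af x) x) (dist (bf x) x)
          + (1 / 2) * max (stableLen (bf ∘ af) x)
            (max (2 * stableLen af x) (2 * stableLen bf x)) + 12 * δ := hmain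
      _ ≤ u n + v (2 * n) / 2 + 12 * δ := by linarith
  -- Tendsto of the even subsequence
  have hcast2 : ∀ n : ℕ, ((2 * n : ℕ) : ℝ) = 2 * (n : ℝ) := by
    intro n; push_cast; ring
  have h2n : Tendsto (fun n : ℕ => 2 * n) atTop atTop := by
    refine tendsto_atTop.mpr fun b => eventually_atTop.mpr ⟨b, fun k hk => by omega⟩
  have hG : Tendsto (fun n : ℕ => u (2 * n) / ((2 * n : ℕ) : ℝ)) atTop (𝓝 D) := hD.comp h2n
  have hzero : Tendsto (fun n : ℕ => 12 * δ / (n : ℝ)) atTop (𝓝 0) :=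
    tendsto_const_div_atTop_nhds_zero_nat (12 * δ)
  have hLo : Tendsto (fun n : ℕ => 2 * D - u n / (n : ℝ) - 12 * δ / (n : ℝ)) atTop (𝓝 D) := by
    have h2 := ((((tendsto_const_nhds : Tendsto (fun _ : ℕ => 2 * D) atTop (𝓝 (2 * D))))).sub hD).sub hzero
    have h3 : 2 * D - D - 0 = D := by ring
    rwa [h3] at h2
  have hTend2 : Tendsto (fun n : ℕ => dInfty (powSet S (2 * n)) x / (2 * (n:ℝ)))
      atTop (𝓝 D) := by
    refine tendsto_of_tendsto_of_tendsto_of_le_of_le' hLo hG ?_ ?_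
    · filter_upwards [eventually_ge_atTop 1] with n hn
      have hnpos : (0:ℝ) < (n:ℝ) := by exact_mod_cast hn
      have hv2 : 2 * ((2 * (n:ℝ)) * D - u n - 12 * δ) ≤ v (2 * n) := by
        have hk := hkey n
        have hd2 := hD' (2 * n) (by omega)
        rw [hcast2 n] at hd2
        linarith
      show 2 * D - u n / (n : ℝ) - 12 * δ / (n : ℝ) ≤ v (2 * n) / (2 * (n:ℝ))
      rw [le_div_iff₀ (by positivity)]
      have hexp : (2 * D - u n / (n : ℝ) - 12 * δ / (n : ℝ)) * (2 * (n:ℝ))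
          = 2 * ((2 * (n:ℝ)) * D - u n - 12 * δ) := by
        field_simp
      rw [hexp]
      exact hv2
    · filter_upwards [eventually_ge_atTop 1] with n hn
      have hnpos : (0:ℝ) < (n:ℝ) := by exact_mod_cast hn
      show v (2 * n) / (2 * (n:ℝ)) ≤ u (2 * n) / ((2 * n : ℕ) : ℝ)
      rw [hcast2 n]
      exact (div_le_div_iff_of_pos_right (by positivity)).mpr (huv (2 * n))
  -- limsup statement
  have hbddU : IsBoundedUnder (· ≤ ·) atTop (fun n : ℕ => u n / (n : ℝ)) :=
    hD.isBoundedUnder_le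
  have hev : (fun n : ℕ => v n / (n : ℝ)) ≤ᶠ[atTop] (fun n : ℕ => u n / (n : ℝ)) := by
    filter_upwards [eventually_ge_atTop 1] with n hn
    have hnpos : (0:ℝ) < (n:ℝ) := by exact_mod_cast hn
    exact (div_le_div_iff_of_pos_right hnpos).mpr (huv n)
  have hbddV : IsBoundedUnder (· ≤ ·) atTop (fun n : ℕ => v n / (n : ℝ)) :=
    hbddU.mono_le hev
  have hcoV : IsCoboundedUnder (· ≤ ·) atTop (fun n : ℕ => v n / (n : ℝ)) := by
    refine Filter.IsBoundedUnder.isCoboundedUnder_le (⟨0, ?_⟩)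
    rw [eventually_map]
    filter_upwards with n
    exact div_nonneg (hv0 n) (Nat.cast_nonneg n)
  have hlimsup_le : Filter.limsup (fun n : ℕ => v n / (n : ℝ)) atTop ≤ D := by
    have h1 : Filter.limsup (fun n : ℕ => u n / (n : ℝ)) atTop = D := hD.limsup_eq
    rw [← h1]
    exact Filter.limsup_le_limsup hev hcoV hbddU
  have hlimsup_ge : D ≤ Filter.limsup (fun n : ℕ => v n / (n : ℝ)) atTop := by
    refine le_of_forall_pos_le_add fun ε hε => ?_
    have hfreq : ∃ᶠ n : ℕ in atTop, D - ε ≤ v n / (n : ℝ) := by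
      have hev2 : ∀ᶠ k : ℕ in atTop,
          D - ε < dInfty (powSet S (2 * k)) x / (2 * (k:ℝ)) :=
        hTend2.eventually (eventually_gt_nhds (by linarith))
      rw [Filter.frequently_atTop]
      intro N
      obtain ⟨K, hK⟩ := eventually_atTop.mp hev2
      refine ⟨2 * max K N, by omega, ?_⟩
      have h := hK (max K N) (le_max_left _ _)
      have : v (2 * max K N) / ((2 * max K N : ℕ) : ℝ)
          = dInfty (powSet S (2 * max K N)) x / (2 * ((max K N : ℕ) : ℝ)) := by
        rw [hcast2]
      rw [this]
      linarith
    have := Filter.le_limsup_of_frequently_le hfreq hbddV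
    linarith
  constructor
  · exact le_antisymm hlimsup_ge hlimsup_le
  · exact hTend2
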